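/- arXiv:1002.3363 — 6 statements merged into one kernel-verified Lean document; each statement's English description precedes it below -/
import Mathlib

section
/- Let mu > 2 be a real number and let F_mu : R -> R be the map F_mu(x) = mu - x^2. Then for every integer p >= 1, the set of real fixed points of the p-th iterate F_mu^p has exactly 2^p elements, and for every integer p >= 1 there exists a point of minimal period p (i.e., x with F_mu^p(x) = x and F_mu^q(x) != x for all 1 <= q < p). In particular F_mu has exponential periodic orbit growth. -/
namespace Stmt0Aux

noncomputable def fm (μ : ℝ) (x : ℝ) : ℝ := μ - x ^ 2
noncomputable def bet (μ : ℝ) : ℝ := (1 + Real.sqrt (1 + 4 * μ)) / 2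
noncomputable def gam (μ : ℝ) : ℝ := Real.sqrt (μ - bet μ)
noncomputable def h (μ : ℝ) (b : Bool) (y : ℝ) : ℝ :=
  (if b then 1 else -1) * Real.sqrt (μ - y)

variable {μ : ℝ} (hμ : 2 < μ)

lemma bet_sq (hμ : 2 < μ) : bet μ ^ 2 = μ + bet μ := by
  have h0 : (0:ℝ) ≤ 1 + 4 * μ := by nlinarith
  have hs : Real.sqrt (1 + 4 * μ) ^ 2 = 1 + 4 * μ := Real.sq_sqrt h0
  unfold bet; nlinarith [hs]

include hμ

lemma two_lt_bet : 2 < bet μ := by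
  have h0 : (0:ℝ) ≤ 1 + 4 * μ := by nlinarith
  have hs : Real.sqrt (1 + 4 * μ) ^ 2 = 1 + 4 * μ := Real.sq_sqrt h0
  have hs0 : 0 ≤ Real.sqrt (1 + 4 * μ) := Real.sqrt_nonneg _
  have : 3 < Real.sqrt (1 + 4 * μ) := by nlinarith
  unfold bet; linarith

lemma bet_lt_mu : bet μ < μ := by
  have h1 := two_lt_bet hμ
  have h2 : bet μ ^ 2 = μ + bet μ := bet_sq hμ
  nlinarith

lemma gam_sq : gam μ ^ 2 = μ - bet μ := Real.sq_sqrt (le_of_lt (by linarith [bet_lt_mu hμ]))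

lemma gam_pos : 0 < gam μ := Real.sqrt_pos.2 (by linarith [bet_lt_mu hμ])

lemma gam_lt_bet : gam μ < bet μ := by
  have h1 := gam_sq hμ
  have h2 : bet μ ^ 2 = μ + bet μ := bet_sq hμ
  have h3 := two_lt_bet hμ
  have h4 := gam_pos hμ
  nlinarith

/-- h is a right inverse of f on the relevant range -/
lemma f_h (b : Bool) {y : ℝ} (hy : y ∈ Set.Icc (-bet μ) (bet μ)) :
    fm μ (h μ b y) = y := by
  have hyμ : y ≤ μ := le_trans hy.2 (le_of_lt (bet_lt_mu hμ))
  have : Real.sqrt (μ - y) ^ 2 = μ - y := Real.sq_sqrt (by linarith)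
  unfold fm h
  cases b <;> simp <;> nlinarith [this]

lemma h_bounds (b : Bool) {y : ℝ} (hy : y ∈ Set.Icc (-bet μ) (bet μ)) :
    gam μ ≤ |h μ b y| ∧ |h μ b y| ≤ bet μ ∧
      (b = true → gam μ ≤ h μ b y) ∧ (b = false → h μ b y ≤ -gam μ) := by
  have hb0 : 0 < bet μ := by linarith [two_lt_bet hμ]
  have h1 : gam μ ≤ Real.sqrt (μ - y) := by
    unfold gam
    exact Real.sqrt_le_sqrt (by linarith [hy.2])
  have h2 : Real.sqrt (μ - y) ≤ bet μ := by
    have hb : μ - y ≤ bet μ ^ 2 := by nlinarith [bet_sq hμ, hy.1]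
    calc Real.sqrt (μ - y) ≤ Real.sqrt (bet μ ^ 2) := Real.sqrt_le_sqrt hb
      _ = bet μ := by rw [Real.sqrt_sq hb0.le]
  have hsn : 0 ≤ Real.sqrt (μ - y) := Real.sqrt_nonneg _
  cases b with
  | true =>
    have he : h μ true y = Real.sqrt (μ - y) := by unfold h; simp
    rw [he, abs_of_nonneg hsn]
    exact ⟨h1, h2, fun _ => h1, fun hc => by simp at hc⟩
  | false =>
    have he : h μ false y = -Real.sqrt (μ - y) := by unfold h; simp
    rw [he, abs_neg, abs_of_nonneg hsn]
    exact ⟨h1, h2, fun hc => by simp at hc, fun _ => by linarith⟩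

lemma h_mem (b : Bool) {y : ℝ} (hy : y ∈ Set.Icc (-bet μ) (bet μ)) :
    h μ b y ∈ Set.Icc (-bet μ) (bet μ) := by
  obtain ⟨_, h2, _, _⟩ := h_bounds hμ b hy
  exact ⟨neg_le_of_abs_le h2, le_of_abs_le h2⟩

omit hμ
lemma h_cont (b : Bool) : Continuous (h μ b) := by
  unfold h
  exact continuous_const.mul (Real.continuous_sqrt.comp (continuous_const.sub continuous_id))
include hμ

noncomputable def H (μ : ℝ) : List Bool → ℝ → ℝ
  | [], y => y
  | b :: t, y => h μ b (H μ t y)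

lemma H_mem (l : List Bool) {y : ℝ} (hy : y ∈ Set.Icc (-bet μ) (bet μ)) :
    H μ l y ∈ Set.Icc (-bet μ) (bet μ) := by
  induction l with
  | nil => exact hy
  | cons b t ih => exact h_mem hμ b ih

omit hμ
lemma H_cont (l : List Bool) : Continuous (H μ l) := by
  induction l with
  | nil => exact continuous_id
  | cons b t ih => exact (h_cont b).comp ih
include hμ

lemma iter_H (l : List Bool) {y : ℝ} (hy : y ∈ Set.Icc (-bet μ) (bet μ)) :
    ∀ k, k ≤ l.length → (fm μ)^[k] (H μ l y) = H μ (l.drop k) y := by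
  induction l with
  | nil =>
      intro k hk
      have hk0 : k = 0 := Nat.le_zero.mp (by simpa using hk)
      subst hk0; simp [H]
  | cons b t ih =>
    intro k hk
    match k with
    | 0 => simp [H]
    | k + 1 =>
      have hstep : fm μ (H μ (b :: t) y) = H μ t y := f_h hμ b (H_mem hμ t hy)
      rw [Function.iterate_succ_apply, hstep]
      simpa using ih k (by simpa using hk)


lemma H_fix_iter {l : List Bool} {x : ℝ} (hx : x ∈ Set.Icc (-bet μ) (bet μ))
    (hfix : H μ l x = x) : (fm μ)^[l.length] x = x := by
  conv_lhs => rw [← hfix]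
  rw [iter_H hμ l hx l.length le_rfl]
  simp [H, hfix]

lemma exists_fixed (l : List Bool) :
    ∃ x ∈ Set.Icc (-bet μ) (bet μ), H μ l x = x := by
  have hb0 : -bet μ ≤ bet μ := by linarith [two_lt_bet hμ]
  have hc : ContinuousOn (fun x => H μ l x - x) (Set.Icc (-bet μ) (bet μ)) :=
    ((H_cont l).sub continuous_id).continuousOn
  have key := intermediate_value_Icc' hb0 hc
  have h1 : H μ l (bet μ) - bet μ ≤ 0 := by
    have := (H_mem hμ l (Set.mem_Icc.2 ⟨hb0, le_rfl⟩)).2; linarith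
  have h2 : 0 ≤ H μ l (-bet μ) - (-bet μ) := by
    have := (H_mem hμ l (Set.mem_Icc.2 ⟨le_rfl, hb0⟩)).1; linarith
  obtain ⟨x, hx, hx0⟩ := key (Set.mem_Icc.2 ⟨h1, h2⟩)
  exact ⟨x, hx, by simpa [sub_eq_zero] using hx0⟩

lemma iter_sign {l : List Bool} {x : ℝ} (hx : x ∈ Set.Icc (-bet μ) (bet μ))
    (hfix : H μ l x = x) {k : ℕ} (hk : k < l.length) :
    (l[k] = true → gam μ ≤ (fm μ)^[k] x) ∧ (l[k] = false → (fm μ)^[k] x ≤ -gam μ) := by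
  have h1 : (fm μ)^[k] x = H μ (l.drop k) x := by
    conv_lhs => rw [← hfix]
    rw [iter_H hμ l hx k hk.le]
  rw [List.drop_eq_getElem_cons hk] at h1
  have h2 : H μ (l[k] :: l.drop (k+1)) x = h μ l[k] (H μ (l.drop (k+1)) x) := rfl
  rw [h2] at h1
  obtain ⟨_, _, h3, h4⟩ := h_bounds hμ l[k] (H_mem hμ (l.drop (k+1)) hx)
  rw [h1]
  exact ⟨h3, h4⟩

noncomputable def P (μ : ℝ) : ℕ → Polynomial ℝ
  | 0 => Polynomial.X
  | n+1 => Polynomial.C μ - (P μ n)^2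

omit hμ
lemma P_eval (x : ℝ) : ∀ p, (P μ p).eval x = (fm μ)^[p] x
  | 0 => by simp [P]
  | n+1 => by
      rw [Function.iterate_succ_apply']
      simp [P, P_eval x n, fm]

lemma P_natDegree : ∀ p, (P μ p).natDegree = 2 ^ p
  | 0 => by simp [P]
  | n+1 => by
      have ih : (P μ n).natDegree = 2 ^ n := P_natDegree n
      have hsq : ((P μ n)^2).natDegree = 2 * 2^n := by
        rw [Polynomial.natDegree_pow, ih]
      have hlt : (Polynomial.C μ).natDegree < ((P μ n)^2).natDegree := by
        rw [hsq, Polynomial.natDegree_C]; positivity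
      show (Polynomial.C μ - (P μ n)^2).natDegree = 2^(n+1)
      rw [Polynomial.natDegree_sub_eq_right_of_natDegree_lt hlt, hsq, pow_succ,
        Nat.mul_comm]
include hμ

lemma card_lemma (p : ℕ) (hp : 1 ≤ p) :
    {x : ℝ | (fm μ)^[p] x = x}.Finite ∧ {x : ℝ | (fm μ)^[p] x = x}.ncard = 2 ^ p := by
  set S := {x : ℝ | (fm μ)^[p] x = x} with hS
  set Q : Polynomial ℝ := P μ p - Polynomial.X with hQ
  have hQdeg : Q.natDegree = 2 ^ p := by
    have hlt : (Polynomial.X : Polynomial ℝ).natDegree < (P μ p).natDegree := by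
      rw [Polynomial.natDegree_X, P_natDegree]
      exact Nat.one_lt_two_pow_iff.mpr (by omega)
    rw [hQ, Polynomial.natDegree_sub_eq_left_of_natDegree_lt hlt, P_natDegree]
  have hQ0 : Q ≠ 0 := by
    intro hc
    rw [hc, Polynomial.natDegree_zero] at hQdeg
    exact absurd hQdeg.symm (by positivity)
  have hSroot : S = {x : ℝ | Q.IsRoot x} := by
    ext x
    simp only [hS, Set.mem_setOf_eq, Polynomial.IsRoot, hQ, Polynomial.eval_sub,
      Polynomial.eval_X, P_eval, sub_eq_zero]
  have hfin : S.Finite := by rw [hSroot]; exact Polynomial.finite_setOf_isRoot hQ0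
  refine ⟨hfin, le_antisymm ?_ ?_⟩
  · -- upper bound
    have hsub : S ⊆ ↑Q.roots.toFinset := by
      intro x hx
      rw [hSroot] at hx
      simp only [Finset.coe_sort_coe, Multiset.mem_toFinset, Finset.mem_coe]
      exact (Polynomial.mem_roots hQ0).2 hx
    calc S.ncard ≤ (↑Q.roots.toFinset : Set ℝ).ncard :=
          Set.ncard_le_ncard hsub Q.roots.toFinset.finite_toSet
      _ = Q.roots.toFinset.card := Set.ncard_coe_finset _
      _ ≤ Multiset.card Q.roots := Q.roots.toFinset_card_le
      _ ≤ Q.natDegree := Q.card_roots'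
      _ = 2 ^ p := hQdeg
  · -- lower bound via itineraries
    have hEx : ∀ w : Fin p → Bool, ∃ x ∈ Set.Icc (-bet μ) (bet μ),
        H μ (List.ofFn w) x = x := fun w => exists_fixed hμ (List.ofFn w)
    choose ι hι1 hι2 using hEx
    have hfixiter : ∀ w, (fm μ)^[p] (ι w) = ι w := by
      intro w
      have := H_fix_iter hμ (hι1 w) (hι2 w)
      simpa using this
    have hinj : Function.Injective ι := by
      intro w w' hww
      by_contra hne
      obtain ⟨k, hk⟩ := Function.ne_iff.mp hne
      have hklt : (k : ℕ) < (List.ofFn w).length := by simp [k.isLt]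
      have hklt' : (k : ℕ) < (List.ofFn w').length := by simp [k.isLt]
      have hw : (List.ofFn w)[(k : ℕ)] = w k := by simp
      have hw' : (List.ofFn w')[(k : ℕ)] = w' k := by simp
      have s1 := iter_sign hμ (hι1 w) (hι2 w) hklt
      have s2 := iter_sign hμ (hι1 w') (hι2 w') hklt'
      rw [hw] at s1; rw [hw'] at s2
      rw [hww] at s1
      have hg := gam_pos hμ
      cases hb : w k <;> cases hb' : w' k
      · exact hk (hb.trans hb'.symm)
      · have := s1.2 hb; have := s2.1 hb'; linarith
      · have := s1.1 hb; have := s2.2 hb'; linarith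
      · exact hk (hb.trans hb'.symm)
    have hrange : Set.range ι ⊆ S := by
      rintro _ ⟨w, rfl⟩; exact hfixiter w
    calc (2 ^ p : ℕ) = Nat.card (Fin p → Bool) := by simp
      _ = (Set.univ : Set (Fin p → Bool)).ncard := (Set.ncard_univ _).symm
      _ = (ι '' Set.univ).ncard := (Set.ncard_image_of_injective _ hinj).symm
      _ = (Set.range ι).ncard := by rw [Set.image_univ]
      _ ≤ S.ncard := Set.ncard_le_ncard hrange hfin

lemma minper (p : ℕ) (hp : 1 ≤ p) :
    ∃ x : ℝ, (fm μ)^[p] x = x ∧ ∀ q : ℕ, 1 ≤ q → q < p → (fm μ)^[q] x ≠ x := by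
  rcases eq_or_lt_of_le hp with hp1 | hp2
  · refine ⟨-bet μ, ?_, ?_⟩
    · rw [← hp1]
      have : fm μ (-bet μ) = -bet μ := by
        have := bet_sq hμ; unfold fm; nlinarith
      simpa using this
    · intro q hq1 hq2; omega
  · -- p ≥ 2
    set w : Fin p → Bool := fun k => decide ((k : ℕ) = p - 1) with hw
    obtain ⟨x, hx, hfix⟩ := exists_fixed hμ (List.ofFn w)
    have hlen : (List.ofFn w).length = p := by simp
    have hfixp : (fm μ)^[p] x = x := by
      have := H_fix_iter hμ hx hfix; rwa [hlen] at this
    refine ⟨x, hfixp, ?_⟩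
    intro q hq1 hq2 hqfix
    have hg := gam_pos hμ
    -- sign at p-1 : true
    have hk1 : p - 1 < (List.ofFn w).length := by omega
    have hget1 : (List.ofFn w)[p-1] = true := by
      simp [hw]
    have s1 : gam μ ≤ (fm μ)^[p-1] x := by
      have := iter_sign hμ hx hfix hk1
      rw [hget1] at this
      exact this.1 rfl
    -- sign at p-1-q : false
    have hk2 : p - 1 - q < (List.ofFn w).length := by omega
    have hget2 : (List.ofFn w)[p-1-q] = false := by
      simp only [List.getElem_ofFn, hw]
      simp only [decide_eq_false_iff_not]
      omega
    have s2 : (fm μ)^[p-1-q] x ≤ -gam μ := by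
      have := iter_sign hμ hx hfix hk2
      rw [hget2] at this
      exact this.2 rfl
    have heq : (fm μ)^[p-1] x = (fm μ)^[p-1-q] x := by
      have hadd : p - 1 - q + q = p - 1 := by omega
      calc (fm μ)^[p-1] x = (fm μ)^[p-1-q+q] x := by rw [hadd]
        _ = (fm μ)^[p-1-q] ((fm μ)^[q] x) := Function.iterate_add_apply _ _ _ _
        _ = (fm μ)^[p-1-q] x := by rw [hqfix]
    linarith

end Stmt0Aux

/-- For `μ > 2` and `F x = μ - x²`: for every `p ≥ 1` the set of fixed points of the
`p`-th iterate `F^[p]` has exactly `2^p` elements, for every `p ≥ 1` there is a point of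
minimal period `p`, and in particular `F` has exponential periodic orbit growth. -/
theorem stmt_0 (μ : ℝ) (hμ : 2 < μ) (F : ℝ → ℝ) (hF : ∀ x, F x = μ - x ^ 2) :
    (∀ p : ℕ, 1 ≤ p →
      {x : ℝ | F^[p] x = x}.Finite ∧ {x : ℝ | F^[p] x = x}.ncard = 2 ^ p) ∧
    (∀ p : ℕ, 1 ≤ p →
      ∃ x : ℝ, F^[p] x = x ∧ ∀ q : ℕ, 1 ≤ q → q < p → F^[q] x ≠ x) ∧
    (∃ G : ℝ, 1 < G ∧
      {p : ℕ | G ^ p ≤ ({x : ℝ | F^[p] x = x}.ncard : ℝ)}.Infinite) := by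
  have hFfm : F = Stmt0Aux.fm μ := funext fun x => hF x
  subst hFfm
  refine ⟨fun p hp => Stmt0Aux.card_lemma hμ p hp, fun p hp => Stmt0Aux.minper hμ p hp,
    2, one_lt_two, ?_⟩
  have hsub : Set.Ici 1 ⊆ {p : ℕ | (2:ℝ) ^ p ≤ (({x : ℝ | (Stmt0Aux.fm μ)^[p] x = x}.ncard : ℕ) : ℝ)} := by
    intro p hp
    have hc := (Stmt0Aux.card_lemma hμ p hp).2
    simp only [Set.mem_setOf_eq, hc]
    push_cast
    exact le_refl _
  have hIci : (Set.Ici 1 : Set ℕ).Infinite := Set.Ici_infinite 1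
  exact hIci.mono hsub
end

section
/- Let beta >= 0 and let g : R x R -> R be continuously differentiable in x with |g(mu, x)| <= beta and |d g/d x (mu, x)| <= beta for all mu and x. If mu < -(1 + beta), then the map F_mu(x) = mu x - x^3 + g(mu, x) has exactly one fixed point x*, every periodic point of F_mu (of any period) equals x*, and the derivative F_mu'(x*) < -1. Hence F_mu has no regular periodic orbits for mu sufficiently negative: its unique periodic orbit is a flip orbit. -/
/-- Perturbed cubic family `F x = μx - x³ + g μ x`, with `g` continuously
differentiable in `x` and `|g μ x| ≤ β`, `|∂g/∂x (μ, x)| ≤ β`. If `μ < -(1 + β)`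
then `F` has exactly one fixed point `x*`, every periodic point of `F` equals `x*`,
and `F'(x*) < -1`: the unique periodic orbit is a flip orbit, so there are no
regular periodic orbits. -/
theorem stmt_8 (β : ℝ) (hβ : 0 ≤ β) (g : ℝ → ℝ → ℝ)
    (hgdiff : ∀ μ : ℝ, ContDiff ℝ 1 (g μ))
    (hg : ∀ μ x : ℝ, |g μ x| ≤ β) (hg' : ∀ μ x : ℝ, |deriv (g μ) x| ≤ β)
    (μ : ℝ) (hμ : μ < -(1 + β))
    (F : ℝ → ℝ) (hF : ∀ x, F x = μ * x - x ^ 3 + g μ x) :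
    ∃ xstar : ℝ, F xstar = xstar ∧
      (∀ x : ℝ, F x = x → x = xstar) ∧
      (∀ (x : ℝ) (p : ℕ), 1 ≤ p → F^[p] x = x → x = xstar) ∧
      deriv F xstar < -1 := by
  have hFe : F = fun x => μ * x - x ^ 3 + g μ x := funext hF
  have hgd : Differentiable ℝ (g μ) := (hgdiff μ).differentiable one_ne_zero
  have hder : ∀ x : ℝ, HasDerivAt F (μ - 3 * x ^ 2 + deriv (g μ) x) x := by
    intro x
    rw [hFe]
    have h1 : HasDerivAt (fun x : ℝ => μ * x) μ x := by
      simpa using (hasDerivAt_id x).const_mul μ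
    have h2 : HasDerivAt (fun x : ℝ => x ^ 3) (3 * x ^ 2) x := by
      simpa using hasDerivAt_pow 3 x
    have h3 : HasDerivAt (g μ) (deriv (g μ) x) x := (hgd x).hasDerivAt
    exact (h1.sub h2).add h3
  have hderlt : ∀ x : ℝ, deriv F x < -1 := by
    intro x
    rw [(hder x).deriv]
    have := abs_le.mp (hg' μ x)
    nlinarith [sq_nonneg x]
  have hexp : ∀ x y : ℝ, x ≠ y → |x - y| < |F x - F y| := by
    intro x y hxy
    wlog h : x < y generalizing x y
    · have := this y x (Ne.symm hxy) (lt_of_le_of_ne (not_lt.mp h) (Ne.symm hxy))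
      rwa [abs_sub_comm y x, abs_sub_comm (F y) (F x)] at this
    have hdiffF : Differentiable ℝ F := fun z => (hder z).differentiableAt
    obtain ⟨c, _, hc⟩ := exists_hasDerivAt_eq_slope F (deriv F) h
      (hdiffF.continuous.continuousOn) (fun z _ => (hdiffF z).hasDerivAt)
    have hyx : (0:ℝ) < y - x := by linarith
    have h1 : F y - F x = deriv F c * (y - x) := by
      rw [hc]; field_simp
    have h2 : 1 < |deriv F c| := by
      have := hderlt c
      rw [abs_of_neg (by linarith)]; linarith
    calc |x - y| = 1 * |y - x| := by rw [one_mul, abs_sub_comm]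
      _ < |deriv F c| * |y - x| := by
          exact mul_lt_mul_of_pos_right h2 (abs_pos.mpr (by linarith))
      _ = |F y - F x| := by rw [← abs_mul, h1]
      _ = |F x - F y| := abs_sub_comm _ _
  -- existence of a fixed point in [-1, 1]
  have hcontF : Continuous F := by rw [hFe]; fun_prop
  have hcont : ContinuousOn (fun x => F x - x) (Set.Icc (-1 : ℝ) 1) :=
    (hcontF.sub continuous_id).continuousOn
  have hneg : F 1 - 1 ≤ μ - 2 + β := by
    have := abs_le.mp (hg μ 1)
    rw [hF]; nlinarith
  have hpos : -μ + 2 - β ≤ F (-1) - (-1) := by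
    have := abs_le.mp (hg μ (-1))
    rw [hF]; nlinarith
  have hmem : (0:ℝ) ∈ Set.Icc (F 1 - 1) (F (-1) - (-1)) := by
    constructor <;> [linarith; linarith]
  obtain ⟨xstar, _, hx0⟩ := intermediate_value_Icc' (by norm_num : (-1:ℝ) ≤ 1) hcont hmem
  have hfix : F xstar = xstar := by linarith [sub_eq_zero.mp hx0]
  refine ⟨xstar, hfix, ?_, ?_, ?_⟩
  · intro x hx
    by_contra hne
    have := hexp x xstar hne
    rw [hx, hfix] at this
    exact lt_irrefl _ this
  · intro x p hp hiter
    by_contra hne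
    -- iterated expansion
    have key : ∀ q : ℕ, 1 ≤ q → |x - xstar| < |F^[q] x - F^[q] xstar| := by
      intro q hq
      induction q with
      | zero => omega
      | succ n ih =>
        rcases Nat.eq_zero_or_pos n with h0 | h1
        · subst h0; simpa using hexp x xstar hne
        · have hprev := ih h1
          have hne2 : F^[n] x ≠ F^[n] xstar := by
            intro he
            rw [he, sub_self, abs_zero] at hprev
            exact absurd hprev (not_lt.mpr (abs_nonneg _))
          have := hexp (F^[n] x) (F^[n] xstar) hne2
          rw [Function.iterate_succ_apply', Function.iterate_succ_apply']
          linarith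
    have hfixiter : F^[p] xstar = xstar := Function.iterate_fixed hfix p
    have := key p hp
    rw [hiter, hfixiter] at this
    exact lt_irrefl _ this
  · exact hderlt xstar
end

section
/- Let beta >= 0 and let g : R x R -> R satisfy |g(mu, x)| <= beta for all mu and x. If mu >= beta + 1, then every periodic point x of the map x -> mu x - x^3 + g(mu, x) (of any period p >= 1) satisfies |x| <= 2 sqrt(mu). -/
/-- Perturbed cubic family: if `|g μ x| ≤ β` for all `μ, x` and `μ ≥ β + 1`,
then every periodic point `x` (of any period `p ≥ 1`) of `x ↦ μx - x³ + g μ x`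
satisfies `|x| ≤ 2√μ`. -/
theorem stmt_9 (β : ℝ) (hβ : 0 ≤ β) (g : ℝ → ℝ → ℝ)
    (hg : ∀ μ x : ℝ, |g μ x| ≤ β) (μ : ℝ) (hμ : β + 1 ≤ μ)
    (F : ℝ → ℝ) (hF : ∀ x, F x = μ * x - x ^ 3 + g μ x)
    (x : ℝ) (p : ℕ) (hp : 1 ≤ p) (hfix : F^[p] x = x) :
    |x| ≤ 2 * Real.sqrt μ := by
  by_contra hx
  push_neg at hx
  have hμ1 : (1:ℝ) ≤ μ := by linarith
  have hsq : Real.sqrt μ ^ 2 = μ := Real.sq_sqrt (by linarith)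
  have hs0 : 0 ≤ Real.sqrt μ := Real.sqrt_nonneg μ
  have key : ∀ y : ℝ, 2 * Real.sqrt μ < |y| → |y| < |F y| := by
    intro y hy
    have hy0 : 0 ≤ |y| := abs_nonneg y
    have hy2 : 4 * μ < y ^ 2 := by
      have h0 : 0 ≤ 2 * Real.sqrt μ := by positivity
      nlinarith [sq_abs y, mul_self_lt_mul_self h0 hy]
    have hs1 : (1:ℝ) ≤ Real.sqrt μ := by nlinarith
    have hys : (2:ℝ) ≤ |y| := by linarith
    have hb := hg μ y
    have h1 : |μ * y - y ^ 3| = |y| ^ 3 - μ * |y| := by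
      have he : μ * y - y ^ 3 = -(y * (y ^ 2 - μ)) := by ring
      rw [he, abs_neg, abs_mul, abs_of_pos (by nlinarith : (0:ℝ) < y ^ 2 - μ),
        ← sq_abs y]
      ring
    have h2 : |μ * y - y ^ 3| - |g μ y| ≤ |F y| := by
      have h := abs_sub_abs_le_abs_sub (μ * y - y ^ 3) (-(g μ y))
      rw [abs_neg, sub_neg_eq_add] at h
      rw [hF]
      exact h
    have h3 : |y| ^ 3 - μ * |y| - β ≤ |F y| := by
      rw [h1] at h2; linarith
    nlinarith [sq_abs y]
  have mono : ∀ n, |x| ≤ |F^[n] x| := by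
    intro n
    induction n with
    | zero => simp
    | succ n ih =>
      rw [Function.iterate_succ_apply']
      exact le_of_lt (lt_of_le_of_lt ih (key _ (lt_of_lt_of_le hx ih)))
  obtain ⟨n, rfl⟩ : ∃ n, p = n + 1 := ⟨p - 1, (Nat.succ_pred_eq_of_pos hp).symm⟩
  have h := key (F^[n] x) (lt_of_lt_of_le hx (mono n))
  rw [Function.iterate_succ_apply'] at hfix
  rw [hfix] at h
  have := mono n
  linarith
end

section
/- Let beta >= 0 and let g : R x R -> R satisfy |g(mu, x)| <= beta for all mu and x. If mu >= beta + 2, then every periodic point x of the map x -> x^4 - 2 mu x^2 + mu^2/2 + g(mu, x) (of any period p >= 1) satisfies |x| <= 2 sqrt(mu). -/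
/-- Perturbed quartic family: if `|g μ x| ≤ β` for all `μ, x` and `μ ≥ β + 2`,
then every periodic point `x` (of any period `p ≥ 1`) of
`x ↦ x⁴ - 2μx² + μ²/2 + g μ x` satisfies `|x| ≤ 2√μ`. -/
theorem stmt_11 (β : ℝ) (hβ : 0 ≤ β) (g : ℝ → ℝ → ℝ)
    (hg : ∀ μ x : ℝ, |g μ x| ≤ β) (μ : ℝ) (hμ : β + 2 ≤ μ)
    (F : ℝ → ℝ) (hF : ∀ x, F x = x ^ 4 - 2 * μ * x ^ 2 + μ ^ 2 / 2 + g μ x)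
    (x : ℝ) (p : ℕ) (hp : 1 ≤ p) (hfix : F^[p] x = x) :
    |x| ≤ 2 * Real.sqrt μ := by
  have hμ2 : (2:ℝ) ≤ μ := by linarith
  -- key step lemma
  have key : ∀ y : ℝ, 4 * μ < y ^ 2 → y ^ 2 < F y := by
    intro y hy
    have hgy : -β ≤ g μ y := (abs_le.mp (hg μ y)).1
    rw [hF]
    nlinarith [sq_nonneg (y ^ 2 - 2 * μ), sq_nonneg y, sq_nonneg (y^2 - 3*μ)]
  by_contra h
  push_neg at h
  have hx2 : 4 * μ < x ^ 2 := by
    have h0 : (0:ℝ) ≤ 2 * Real.sqrt μ := by positivity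
    have h1 : (2 * Real.sqrt μ) ^ 2 < |x| ^ 2 := by
      exact pow_lt_pow_left₀ h h0 (by norm_num)
    have h2 : Real.sqrt μ ^ 2 = μ := Real.sq_sqrt (by linarith)
    calc 4 * μ = (2 * Real.sqrt μ) ^ 2 := by rw [mul_pow]; rw [h2]; ring
    _ < |x| ^ 2 := h1
    _ = x ^ 2 := sq_abs x
  -- iterates escape
  have grow : ∀ n : ℕ, x ^ 2 < F^[n + 1] x := by
    intro n
    induction n with
    | zero => simpa using key x hx2
    | succ m ih =>
      have h1 : 4 * μ < (F^[m + 1] x) ^ 2 := by nlinarith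
      have h2 := key _ h1
      have : F^[m + 2] x = F (F^[m + 1] x) := Function.iterate_succ_apply' F (m+1) x
      rw [this]
      nlinarith
  obtain ⟨m, rfl⟩ : ∃ m, p = m + 1 := ⟨p - 1, (Nat.succ_pred_eq_of_pos hp).symm⟩
  have := grow m
  rw [hfix] at this
  nlinarith [abs_nonneg x, le_abs_self x, sq_abs x]
end

section
/- Let mu > 0 and F_mu(x) = mu - 2|x|. Then for every integer p >= 1: every periodic point of F_mu lies in [-mu, mu]; the p-th iterate F_mu^p has exactly 2^p fixed points; and there exists a point of minimal period p. In particular F_mu has periodic orbits of all periods and exponential periodic orbit growth for every mu > 0. -/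
noncomputable def tentS : ℝ → ℝ := fun u => 1 - |2*u - 1|

def tnat (N k : ℕ) : ℕ := if 4*k ≤ N then 2*k else N - 2*k

lemma tentS_le {u : ℝ} (h : u ≤ 1/2) : tentS u = 2*u := by
  have h1 : |2*u - 1| = 1 - 2*u := by rw [abs_of_nonpos (by linarith : 2*u-1 ≤ 0)]; ring
  unfold tentS; rw [h1]; ring

lemma tentS_ge {u : ℝ} (h : 1/2 ≤ u) : tentS u = 2 - 2*u := by
  have h1 : |2*u - 1| = 2*u - 1 := abs_of_nonneg (by linarith)
  unfold tentS; rw [h1]; ring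

lemma tentS_nonpos_iter : ∀ (q : ℕ) (u : ℝ), u ≤ 0 → tentS^[q] u = 2^q * u := by
  intro q
  induction q with
  | zero => intro u _; simp
  | succ n ih =>
    intro u hu
    rw [Function.iterate_succ_apply, tentS_le (by linarith), ih _ (by linarith)]
    ring

lemma tnat_inv {N k : ℕ} (h : 2*k ≤ N) : 2 * tnat N k ≤ N := by
  unfold tnat; split <;> omega

lemma tnat_iter_inv {N : ℕ} : ∀ (q k : ℕ), 2*k ≤ N → 2 * (tnat N)^[q] k ≤ N := by
  intro q
  induction q with
  | zero => intro k h; simpa using h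
  | succ n ih =>
    intro k h
    rw [Function.iterate_succ_apply]
    exact ih _ (tnat_inv h)

lemma tentS_apply_frac {N k : ℕ} (hN : 0 < N) (h : 2*k ≤ N) :
    tentS ((2*k : ℝ)/N) = (2 * (tnat N k) : ℝ)/N := by
  have hNR : (0:ℝ) < N := by exact_mod_cast hN
  unfold tnat
  split
  · rename_i h4
    have h4R : (4*k : ℝ) ≤ N := by exact_mod_cast h4
    rw [tentS_le (by rw [div_le_div_iff₀ hNR (by norm_num)]; linarith)]
    push_cast; ring
  · rename_i h4
    have h4R : (N:ℝ) ≤ 4*k := by exact_mod_cast (le_of_not_ge h4)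
    rw [tentS_ge (by rw [div_le_div_iff₀ (by norm_num) hNR]; linarith)]
    have : ((N - 2*k : ℕ) : ℝ) = (N:ℝ) - 2*k := by
      push_cast [Nat.cast_sub h]; ring
    rw [this]
    field_simp

lemma tentS_iter_frac {N : ℕ} (hN : 0 < N) :
    ∀ (q k : ℕ), 2*k ≤ N → tentS^[q] ((2*k : ℝ)/N) = (2 * ((tnat N)^[q] k) : ℝ)/N := by
  intro q
  induction q with
  | zero => intro k h; simp
  | succ n ih =>
    intro k h
    rw [Function.iterate_succ_apply, tentS_apply_frac hN h, ih _ (tnat_inv h),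
      Function.iterate_succ_apply]


lemma tnat_dvd_step {N k : ℕ} (h : 2*k ≤ N) :
    (N:ℤ) ∣ (tnat N k : ℤ) - 2*k ∨ (N:ℤ) ∣ (tnat N k : ℤ) + 2*k := by
  unfold tnat; split
  · left; simp
  · right
    rename_i h4
    have : ((N - 2*k : ℕ) : ℤ) = (N:ℤ) - 2*k := by push_cast [Nat.cast_sub h]; ring
    rw [this]
    exact ⟨1, by ring⟩

lemma tnat_iter_cong {N : ℕ} :
    ∀ (q k : ℕ), 2*k ≤ N → ∃ ε : ℤ, (ε = 1 ∨ ε = -1) ∧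
      (N:ℤ) ∣ (((tnat N)^[q] k : ℕ) : ℤ) - ε * 2^q * k := by
  intro q
  induction q with
  | zero => intro k h; exact ⟨1, Or.inl rfl, by simp⟩
  | succ n ih =>
    intro k h
    obtain ⟨ε, hε, hd⟩ := ih (tnat N k) (tnat_inv h)
    rcases tnat_dvd_step h with hs | hs
    · refine ⟨ε, hε, ?_⟩
      rw [Function.iterate_succ_apply]
      have : (((tnat N)^[n] (tnat N k) : ℕ) : ℤ) - ε * 2^(n+1) * k
          = ((((tnat N)^[n] (tnat N k) : ℕ) : ℤ) - ε * 2^n * (tnat N k))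
            + ε * 2^n * ((tnat N k : ℤ) - 2*k) := by ring
      rw [this]
      exact dvd_add hd (Dvd.dvd.mul_left hs _)
    · refine ⟨-ε, by rcases hε with h1 | h1 <;> simp [h1], ?_⟩
      rw [Function.iterate_succ_apply]
      have : (((tnat N)^[n] (tnat N k) : ℕ) : ℤ) - (-ε) * 2^(n+1) * k
          = ((((tnat N)^[n] (tnat N k) : ℕ) : ℤ) - ε * 2^n * (tnat N k))
            + ε * 2^n * ((tnat N k : ℤ) + 2*k) := by ring
      rw [this]
      exact dvd_add hd (Dvd.dvd.mul_left hs _)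

lemma int_eq_zero_of_bounds {N c : ℤ} (hN : 0 < N) (h1 : -N < N*c) (h2 : N*c < N) : c = 0 := by
  rcases lt_trichotomy c 0 with h | h | h
  · have : N*c ≤ N*(-1) := by nlinarith
    linarith
  · exact h
  · have : N*1 ≤ N*c := by nlinarith
    linarith

lemma tnat_iter_fixed {N k q : ℕ} (hodd : N % 2 = 1) (hN : 0 < N) (h : 2*k ≤ N)
    (hdvd : (N:ℤ) ∣ 2^q - 1 ∨ (N:ℤ) ∣ 2^q + 1) : (tnat N)^[q] k = k := by
  obtain ⟨ε, hε, hd⟩ := tnat_iter_cong q k h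
  set a := (tnat N)^[q] k with ha
  have hainv : 2*a ≤ N := tnat_iter_inv q k h
  have hNZ : (0:ℤ) < N := by exact_mod_cast hN
  -- derive N ∣ a - k or N ∣ a + k
  have key : (N:ℤ) ∣ (a:ℤ) - k ∨ (N:ℤ) ∣ (a:ℤ) + k := by
    rcases hε with rfl | rfl
    · rcases hdvd with hv | hv
      · left
        have : (a:ℤ) - k = ((a:ℤ) - 1 * 2^q * k) + (2^q - 1) * k := by ring
        rw [this]; exact dvd_add hd (hv.mul_right _)
      · right
        have : (a:ℤ) + k = ((a:ℤ) - 1 * 2^q * k) + (2^q + 1) * k := by ring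
        rw [this]; exact dvd_add hd (hv.mul_right _)
    · rcases hdvd with hv | hv
      · right
        have : (a:ℤ) + k = ((a:ℤ) - (-1) * 2^q * k) + (-(2^q - 1)) * k := by ring
        rw [this]; exact dvd_add hd ((hv.neg_right).mul_right _)
      · left
        have : (a:ℤ) - k = ((a:ℤ) - (-1) * 2^q * k) + (-(2^q + 1)) * k := by ring
        rw [this]; exact dvd_add hd ((hv.neg_right).mul_right _)
  have haN : 2*(a:ℤ) < N := by
    have : 2*a < N := by omega
    exact_mod_cast this
  have hkN : 2*(k:ℤ) < N := by
    have : 2*k < N := by omega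
    exact_mod_cast this
  have ha0 : (0:ℤ) ≤ a := Int.ofNat_nonneg _
  have hk0 : (0:ℤ) ≤ k := Int.ofNat_nonneg _
  rcases key with ⟨c, hc⟩ | ⟨c, hc⟩
  · have hc0 : c = 0 := int_eq_zero_of_bounds hNZ (by linarith) (by linarith)
    rw [hc0, mul_zero] at hc
    have : (a:ℤ) = k := by linarith
    exact_mod_cast this
  · have hc0 : c = 0 := int_eq_zero_of_bounds hNZ (by linarith) (by linarith)
    rw [hc0, mul_zero] at hc
    have h1 : (a:ℤ) = 0 := by linarith
    have h2 : (k:ℤ) = 0 := by linarith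
    have h1' : a = 0 := by exact_mod_cast h1
    have h2' : k = 0 := by exact_mod_cast h2
    omega

lemma tent_inj_on_fix (p : ℕ) (hp : 1 ≤ p) {x y : ℝ}
    (hx : tentS^[p] x = x) (hy : tentS^[p] y = y)
    (hit : ∀ i < p, (tentS^[i] x ≤ 1/2 ↔ tentS^[i] y ≤ 1/2)) : x = y := by
  have key : ∀ i ≤ p, |tentS^[i] x - tentS^[i] y| = 2^i * |x - y| := by
    intro i
    induction i with
    | zero => intro _; simp
    | succ n ih =>
      intro hn
      have hn' : n ≤ p := by omega
      have hnp : n < p := by omega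
      rw [Function.iterate_succ_apply', Function.iterate_succ_apply']
      set a := tentS^[n] x
      set b := tentS^[n] y
      have hiff := hit n hnp
      have habs : |tentS a - tentS b| = 2 * |a - b| := by
        rcases le_or_gt a (1/2) with ha | ha
        · have hb : b ≤ 1/2 := hiff.mp ha
          rw [tentS_le ha, tentS_le hb]
          rw [show 2*a - 2*b = 2*(a-b) by ring, abs_mul]
          norm_num
        · have hb : ¬ (b ≤ 1/2) := fun hb => absurd (hiff.mpr hb) (not_le.mpr ha)
          push_neg at hb
          rw [tentS_ge ha.le, tentS_ge hb.le]
          rw [show (2 - 2*a) - (2 - 2*b) = -(2*(a-b)) by ring, abs_neg, abs_mul]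
          norm_num
      rw [habs, ih hn', pow_succ]
      ring
  have h := key p le_rfl
  rw [hx, hy] at h
  have h2 : (2:ℝ) ≤ 2^p := by
    calc (2:ℝ) = 2^1 := by norm_num
    _ ≤ 2^p := pow_le_pow_right₀ (by norm_num) hp
  have habs0 : |x - y| = 0 := by nlinarith [abs_nonneg (x-y)]
  have := abs_eq_zero.mp habs0
  linarith

lemma fixS_finite_le (p : ℕ) (hp : 1 ≤ p) :
    {u : ℝ | tentS^[p] u = u}.Finite ∧ {u : ℝ | tentS^[p] u = u}.ncard ≤ 2^p := by
  classical
  set Fx := {u : ℝ | tentS^[p] u = u} with hFx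
  set f : ℝ → (Fin p → Bool) := fun x i => decide (tentS^[i.1] x ≤ 1/2) with hf
  have hinj : Set.InjOn f Fx := by
    intro x hx y hy hxy
    apply tent_inj_on_fix p hp hx hy
    intro i hi
    have := congrFun hxy ⟨i, hi⟩
    simpa [hf] using this
  have hfin : Fx.Finite := Set.Finite.of_finite_image (Set.toFinite _) hinj
  refine ⟨hfin, ?_⟩
  calc Fx.ncard = (f '' Fx).ncard := (Set.ncard_image_of_injOn hinj).symm
    _ ≤ (Set.univ : Set (Fin p → Bool)).ncard :=
        Set.ncard_le_ncard (Set.subset_univ _) Set.finite_univ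
    _ = 2^p := by
        simp [Set.ncard_univ, Nat.card_eq_fintype_card]

lemma fixS_mem_Icc (p : ℕ) (hp : 1 ≤ p) {u : ℝ} (hu : tentS^[p] u = u) :
    u ∈ Set.Icc (0:ℝ) 1 := by
  have h2 : (2:ℝ) ≤ 2^p := by
    calc (2:ℝ) = 2^1 := by norm_num
    _ ≤ 2^p := pow_le_pow_right₀ (by norm_num) hp
  rcases lt_or_ge u 0 with h0 | h0
  · exfalso
    have := tentS_nonpos_iter p u h0.le
    rw [hu] at this
    nlinarith
  rcases le_or_gt u 1 with h1 | h1
  · exact ⟨h0, h1⟩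
  · exfalso
    obtain ⟨m, rfl⟩ : ∃ m, p = m + 1 := ⟨p - 1, by omega⟩
    rw [Function.iterate_succ_apply, tentS_ge (by linarith),
      tentS_nonpos_iter m _ (by linarith)] at hu
    have hm : (1:ℝ) ≤ 2^m := one_le_pow₀ (by norm_num)
    nlinarith [mul_nonneg (sub_nonneg.mpr hm) (by linarith : (0:ℝ) ≤ 2*u - 2)]

lemma frac_inj {N : ℕ} (hN : 0 < N) : Function.Injective (fun k : ℕ => (2*k : ℝ)/N) := by
  intro a b h
  simp only at h
  have hNR : (0:ℝ) < N := by exact_mod_cast hN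
  rw [div_eq_div_iff (ne_of_gt hNR) (ne_of_gt hNR)] at h
  have h2 : (2*(a:ℝ)) = 2*b := mul_right_cancel₀ (ne_of_gt hNR) h
  have : (a:ℝ) = b := by linarith
  exact_mod_cast this

lemma fixS_card (p : ℕ) (hp : 1 ≤ p) :
    {u : ℝ | tentS^[p] u = u}.Finite ∧ {u : ℝ | tentS^[p] u = u}.ncard = 2^p := by
  obtain ⟨m, rfl⟩ : ∃ m, p = m + 1 := ⟨p - 1, by omega⟩
  set p := m + 1
  have hm1 : 1 ≤ 2^m := Nat.one_le_two_pow
  have hpow : 2^p = 2*2^m := by rw [pow_succ]; ring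
  set N₁ : ℕ := 2^p + 1 with hN₁def
  set N₂ : ℕ := 2^p - 1 with hN₂def
  have hN₁ : 0 < N₁ := by omega
  have hN₂ : 0 < N₂ := by omega
  have hN₁odd : N₁ % 2 = 1 := by omega
  have hN₂odd : N₂ % 2 = 1 := by omega
  have hN₁Z : (N₁ : ℤ) = 2^p + 1 := by rw [hN₁def]; norm_num
  have hN₂Z : (N₂ : ℤ) = 2^p - 1 := by
    have : (1:ℕ) ≤ 2^p := by omega
    rw [hN₂def, Nat.cast_sub this]; norm_num
  obtain ⟨hfin, hle⟩ := fixS_finite_le p hp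
  refine ⟨hfin, ?_⟩
  set E : Finset ℝ :=
    ((Finset.range (2^m + 1)).image (fun k : ℕ => (2*k : ℝ)/N₁)) ∪
    ((Finset.Ico 1 (2^m)).image (fun k : ℕ => (2*k : ℝ)/N₂)) with hE
  have hsub : (E : Set ℝ) ⊆ {u : ℝ | tentS^[p] u = u} := by
    intro a ha
    simp only [hE, Finset.coe_union, Finset.coe_image, Set.mem_union, Set.mem_image,
      Finset.mem_coe, Finset.mem_range, Finset.mem_Ico] at ha
    rcases ha with ⟨k, hk, rfl⟩ | ⟨k, hk, rfl⟩
    · have h2k : 2*k ≤ N₁ := by omega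
      show tentS^[p] ((2*k : ℝ)/N₁) = (2*k : ℝ)/N₁
      rw [tentS_iter_frac hN₁ p k h2k,
        tnat_iter_fixed hN₁odd hN₁ h2k (Or.inr (hN₁Z ▸ dvd_refl _))]
    · have h2k : 2*k ≤ N₂ := by omega
      show tentS^[p] ((2*k : ℝ)/N₂) = (2*k : ℝ)/N₂
      rw [tentS_iter_frac hN₂ p k h2k,
        tnat_iter_fixed hN₂odd hN₂ h2k (Or.inl (hN₂Z ▸ dvd_refl _))]
  have hdisj : Disjoint ((Finset.range (2^m + 1)).image (fun k : ℕ => (2*k : ℝ)/N₁))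
      ((Finset.Ico 1 (2^m)).image (fun k : ℕ => (2*k : ℝ)/N₂)) := by
    rw [Finset.disjoint_left]
    intro a ha hb
    simp only [Finset.mem_image, Finset.mem_range, Finset.mem_Ico] at ha hb
    obtain ⟨k, hk, rfl⟩ := ha
    obtain ⟨j, hj, heq⟩ := hb
    have hN₁R : (0:ℝ) < N₁ := by exact_mod_cast hN₁
    have hN₂R : (0:ℝ) < N₂ := by exact_mod_cast hN₂
    rw [div_eq_div_iff (ne_of_gt hN₂R) (ne_of_gt hN₁R)] at heq
    have hZe : 2*(j:ℤ) * N₁ = 2*(k:ℤ) * N₂ := by exact_mod_cast heq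
    rw [hN₁Z, hN₂Z] at hZe
    set M := (2:ℤ)^m with hM
    have hpZ : (2:ℤ)^p = 2*M := by rw [hM, pow_succ]; ring
    rw [hpZ] at hZe
    have hMk : (k:ℤ) ≤ M := by
      have : (k:ℤ) ≤ 2^m := by exact_mod_cast Nat.lt_succ_iff.mp (by omega)
      simpa [hM] using this
    have hj1 : 1 ≤ (j:ℤ) := by exact_mod_cast hj.1
    have hj2 : (j:ℤ) ≤ M - 1 := by
      have : (j:ℤ) ≤ 2^m - 1 := by
        have : j ≤ 2^m - 1 := by omega
        have h2 : (j:ℤ) ≤ ((2^m - 1 : ℕ) : ℤ) := by exact_mod_cast this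
        rwa [Nat.cast_sub hm1, Nat.cast_pow] at h2
      simpa [hM] using this
    have hM1 : (1:ℤ) ≤ M := by rw [hM]; exact one_le_pow₀ (by norm_num)
    have hk0 : (0:ℤ) ≤ k := Int.ofNat_nonneg _
    -- j*(2M+1) = k*(2M-1)
    have e1 : 2*M*((k:ℤ) - j) = k + j := by ring_nf; ring_nf at hZe; linarith
    have e2 : (j:ℤ) < k := by
      by_contra hcon
      push_neg at hcon
      have h1 : 2*M*((k:ℤ)-j) ≤ 0 := by nlinarith
      linarith
    have e3 : 2*M ≤ (k:ℤ) + j := by nlinarith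
    linarith
  have hcard : E.card = 2^p := by
    rw [hE, Finset.card_union_of_disjoint hdisj,
      Finset.card_image_of_injective _ (frac_inj hN₁),
      Finset.card_image_of_injective _ (frac_inj hN₂),
      Finset.card_range, Nat.card_Ico]
    omega
  have hge : 2^p ≤ {u : ℝ | tentS^[p] u = u}.ncard := by
    rw [← hcard, ← Set.ncard_coe_finset E]
    exact Set.ncard_le_ncard hsub hfin
  omega

lemma fixS_minper (p : ℕ) (hp : 1 ≤ p) :
    ∃ u : ℝ, tentS^[p] u = u ∧ ∀ q : ℕ, 1 ≤ q → q < p → tentS^[q] u ≠ u := by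
  set N₁ : ℕ := 2^p + 1 with hN₁def
  have hN₁ : 0 < N₁ := by positivity
  have hm1 : 1 ≤ 2^p := Nat.one_le_two_pow
  have hN₁odd : N₁ % 2 = 1 := by
    have : 2^p % 2 = 0 := by
      have : ∃ m, p = m + 1 := ⟨p - 1, by omega⟩
      obtain ⟨m, rfl⟩ := this
      simp [pow_succ, Nat.mul_mod]
    omega
  have hN₁Z : (N₁ : ℤ) = 2^p + 1 := by rw [hN₁def]; norm_num
  have h21 : 2*1 ≤ N₁ := by omega
  refine ⟨(2*((1:ℕ):ℝ))/(N₁:ℝ), ?_, ?_⟩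
  · rw [tentS_iter_frac hN₁ p 1 h21,
      tnat_iter_fixed hN₁odd hN₁ h21 (Or.inr (hN₁Z ▸ dvd_refl _))]
  · intro q hq1 hqp hcon
    rw [tentS_iter_frac hN₁ q 1 h21] at hcon
    have hN₁R : (0:ℝ) < N₁ := by exact_mod_cast hN₁
    have ha : (tnat N₁)^[q] 1 = 1 := frac_inj hN₁ hcon
    obtain ⟨ε, hε, hd⟩ := tnat_iter_cong q 1 h21
    rw [ha] at hd
    push_cast [hN₁Z] at hd
    have hq2 : (2:ℤ)^q < 2^p := by
      have : (2:ℕ)^q < 2^p := Nat.pow_lt_pow_right (by norm_num) hqp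
      exact_mod_cast this
    have hq0 : (1:ℤ) ≤ 2^q := one_le_pow₀ (by norm_num)
    have hq1' : (2:ℤ) ≤ 2^q := by
      calc (2:ℤ) = 2^1 := by norm_num
      _ ≤ 2^q := pow_le_pow_right₀ (by norm_num) hq1
    rcases hε with rfl | rfl
    · have hd' : ((2:ℤ)^p + 1) ∣ 2^q - 1 := by
        have := hd.neg_right
        simpa using this
      have := Int.le_of_dvd (by linarith) hd'
      linarith
    · have hd' : ((2:ℤ)^p + 1) ∣ 2^q + 1 := by
        have h' : (1:ℤ) - (-1) * 2^q * 1 = 2^q + 1 := by ring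
        rwa [h'] at hd
      have := Int.le_of_dvd (by linarith) hd'
      linarith

/-- For `μ > 0` and `F x = μ - 2|x|`: every periodic point lies in `[-μ, μ]`, the `p`-th
iterate has exactly `2^p` fixed points, and there is a point of minimal period `p`, for
every `p ≥ 1`. In particular `F` has periodic orbits of all periods and exponential
periodic orbit growth for every `μ > 0`. -/
theorem stmt_13 (μ : ℝ) (hμ : 0 < μ) (F : ℝ → ℝ) (hF : ∀ x, F x = μ - 2 * |x|) :
    (∀ p : ℕ, 1 ≤ p →
      (∀ x : ℝ, F^[p] x = x → x ∈ Set.Icc (-μ) μ) ∧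
      ({x : ℝ | F^[p] x = x}.Finite ∧ {x : ℝ | F^[p] x = x}.ncard = 2 ^ p) ∧
      (∃ x : ℝ, F^[p] x = x ∧ ∀ q : ℕ, 1 ≤ q → q < p → F^[q] x ≠ x)) ∧
    (∃ G : ℝ, 1 < G ∧
      {p : ℕ | G ^ p ≤ ({x : ℝ | F^[p] x = x}.ncard : ℝ)}.Infinite) := by
  set φ : ℝ → ℝ := fun u => 2*μ*u - μ with hφ
  have hconj : ∀ u, F (φ u) = φ (tentS u) := by
    intro u
    rw [hF]
    show μ - 2 * |2*μ*u - μ| = 2*μ*(1 - |2*u - 1|) - μ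
    have h1 : 2*μ*u - μ = μ*(2*u - 1) := by ring
    rw [h1, abs_mul, abs_of_pos hμ]
    ring
  have hiter : ∀ (p : ℕ) (u : ℝ), F^[p] (φ u) = φ (tentS^[p] u) := by
    intro p
    induction p with
    | zero => intro u; simp
    | succ n ih =>
      intro u
      rw [Function.iterate_succ_apply, hconj, ih, Function.iterate_succ_apply]
  have hφinj : Function.Injective φ := by
    intro a b h
    simp only [hφ] at h
    have h2 : (2:ℝ)*μ ≠ 0 := by positivity
    exact mul_left_cancel₀ h2 (by linarith)
  have hFix : ∀ p : ℕ, {x : ℝ | F^[p] x = x} = φ '' {u : ℝ | tentS^[p] u = u} := by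
    intro p
    ext x
    constructor
    · intro hx
      have hxφ : φ ((x+μ)/(2*μ)) = x := by
        show 2*μ*((x+μ)/(2*μ)) - μ = x
        field_simp; ring
      refine ⟨(x+μ)/(2*μ), ?_, hxφ⟩
      show tentS^[p] ((x+μ)/(2*μ)) = (x+μ)/(2*μ)
      apply hφinj
      rw [← hiter p, hxφ]
      exact hx
    · rintro ⟨u, hu, rfl⟩
      show F^[p] (φ u) = φ u
      rw [hiter, hu]
  constructor
  · intro p hp
    obtain ⟨hfin, hcard⟩ := fixS_card p hp
    refine ⟨?_, ⟨?_, ?_⟩, ?_⟩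
    · intro x hx
      have hx' : x ∈ φ '' {u : ℝ | tentS^[p] u = u} := (hFix p) ▸ hx
      obtain ⟨u, hu, rfl⟩ := hx'
      obtain ⟨hu0, hu1⟩ := fixS_mem_Icc p hp hu
      constructor
      · show -μ ≤ 2*μ*u - μ
        nlinarith
      · show 2*μ*u - μ ≤ μ
        nlinarith
    · rw [hFix p]
      exact hfin.image φ
    · rw [hFix p, Set.ncard_image_of_injective _ hφinj]
      exact hcard
    · obtain ⟨u, hu, hq⟩ := fixS_minper p hp
      refine ⟨φ u, ?_, ?_⟩
      · rw [hiter, hu]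
      · intro q h1 h2 hcon
        rw [hiter] at hcon
        exact hq q h1 h2 (hφinj hcon)
  · refine ⟨3/2, by norm_num, ?_⟩
    apply Set.Infinite.mono (s := Set.Ioi 0)
    · intro p hp
      have hp1 : 1 ≤ p := hp
      obtain ⟨hfin, hcard⟩ := fixS_card p hp1
      show (3/2 : ℝ)^p ≤ _
      rw [hFix p, Set.ncard_image_of_injective _ hφinj, hcard]
      push_cast
      exact pow_le_pow_left₀ (by norm_num) (by norm_num) p
    · exact Set.Ioi_infinite 0
end

section
/- Let 1 < mu < (1 + sqrt(5))/2 and let T_mu(x) = 1 - mu |x|. Then T_mu has no periodic point of minimal period 3: there is no x in R with T_mu^[3](x) = x, T_mu(x) != x and T_mu^[2](x) != x. Hence mu3 = (1 + sqrt(5))/2 is the smallest parameter in (1, 2] at which the tent family has a period-three orbit. -/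
/-- For `1 < μ < (1 + √5)/2`, the tent map `T_μ x = 1 - μ|x|` has no periodic point of
minimal period 3. Hence `μ₃ = (1 + √5)/2` is the smallest parameter in `(1, 2]` at which
the tent family has a period-three orbit. -/
theorem stmt_16 (μ : ℝ) (hμ1 : 1 < μ) (hμ2 : μ < (1 + Real.sqrt 5) / 2)
    (T : ℝ → ℝ) (hT : ∀ x, T x = 1 - μ * |x|) :
    ¬ ∃ x : ℝ, T^[3] x = x ∧ T x ≠ x ∧ T^[2] x ≠ x := by
  -- From μ < (1+√5)/2 we get μ² < μ + 1.
  have h5 : Real.sqrt 5 ^ 2 = 5 := Real.sq_sqrt (by norm_num)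
  have hs0 : (0:ℝ) ≤ Real.sqrt 5 := Real.sqrt_nonneg 5
  have hμ2' : μ ^ 2 < μ + 1 := by
    have h1 : (0:ℝ) < Real.sqrt 5 - (2*μ - 1) := by linarith
    have h2 : (0:ℝ) < Real.sqrt 5 + (2*μ - 1) := by linarith
    nlinarith [mul_pos h1 h2]
  rintro ⟨x, h3, h1, _h2⟩
  simp only [Function.iterate_succ, Function.iterate_zero, Function.comp_apply, id_eq] at h3
  set y := T x with hy
  set z := T y with hz
  have ex : y = 1 - μ * |x| := hT x
  have ey : z = 1 - μ * |y| := hT y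
  have ez : x = 1 - μ * |z| := by rw [← h3, hT z]
  have hN : 0 < 1 + μ - μ ^ 2 := by nlinarith
  have hcube : 1 < μ ^ 3 := by nlinarith
  rcases le_total 0 x with hx0 | hx0 <;> rcases le_total 0 y with hy0 | hy0 <;>
    rcases le_total 0 z with hz0 | hz0
  all_goals first | rw [abs_of_nonneg hx0] at ex | rw [abs_of_nonpos hx0] at ex
  all_goals first | rw [abs_of_nonneg hy0] at ey | rw [abs_of_nonpos hy0] at ey
  all_goals first | rw [abs_of_nonneg hz0] at ez | rw [abs_of_nonpos hz0] at ez
  -- case (+,+,+): all nonneg, x and y both solve t(1+μ³) = 1-μ+μ², so y = x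
  · have kx : x * (1 + μ ^ 3) = 1 - μ + μ ^ 2 := by linear_combination ez - μ * ey + μ ^ 2 * ex
    have ky : y * (1 + μ ^ 3) = 1 - μ + μ ^ 2 := by linear_combination ex - μ * ez + μ ^ 2 * ey
    have hd : (y - x) * (1 + μ ^ 3) = 0 := by linear_combination ky - kx
    have : y - x = 0 := by
      rcases mul_eq_zero.mp hd with h | h
      · exact h
      · nlinarith
    exact h1 (by linarith)
  -- case (+,+,−): x(1-μ³) = 1+μ-μ² > 0, but LHS ≤ 0
  · have key : x * (1 - μ ^ 3) = 1 + μ - μ ^ 2 := by linear_combination ez + μ * ey - μ ^ 2 * ex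
    nlinarith [mul_nonneg hx0 (le_of_lt (show (0:ℝ) < μ ^ 3 - 1 by linarith))]
  -- case (+,−,+): z has pattern (+,+,−)
  · have key : z * (1 - μ ^ 3) = 1 + μ - μ ^ 2 := by linear_combination ey + μ * ex - μ ^ 2 * ez
    nlinarith [mul_nonneg hz0 (le_of_lt (show (0:ℝ) < μ ^ 3 - 1 by linarith))]
  -- case (+,−,−): z has pattern (−,+,−)
  · have key : z * (1 + μ ^ 3) = 1 + μ - μ ^ 2 := by linear_combination ey + μ * ex - μ ^ 2 * ez
    nlinarith [mul_nonneg (neg_nonneg.mpr hz0) (le_of_lt (show (0:ℝ) < μ ^ 3 + 1 by linarith))]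
  -- case (−,+,+): y has pattern (+,+,−)
  · have key : y * (1 - μ ^ 3) = 1 + μ - μ ^ 2 := by linear_combination ex + μ * ez - μ ^ 2 * ey
    nlinarith [mul_nonneg hy0 (le_of_lt (show (0:ℝ) < μ ^ 3 - 1 by linarith))]
  -- case (−,+,−): x has pattern (−,+,−)
  · have key : x * (1 + μ ^ 3) = 1 + μ - μ ^ 2 := by linear_combination ez + μ * ey - μ ^ 2 * ex
    nlinarith [mul_nonneg (neg_nonneg.mpr hx0) (le_of_lt (show (0:ℝ) < μ ^ 3 + 1 by linarith))]
  -- case (−,−,+): y has pattern (−,+,−)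
  · have key : y * (1 + μ ^ 3) = 1 + μ - μ ^ 2 := by linear_combination ex + μ * ez - μ ^ 2 * ey
    nlinarith [mul_nonneg (neg_nonneg.mpr hy0) (le_of_lt (show (0:ℝ) < μ ^ 3 + 1 by linarith))]
  -- case (−,−,−): x and y both solve t(1-μ³) = 1+μ+μ², so y = x
  · have kx : x * (1 - μ ^ 3) = 1 + μ + μ ^ 2 := by linear_combination ez + μ * ey + μ ^ 2 * ex
    have ky : y * (1 - μ ^ 3) = 1 + μ + μ ^ 2 := by linear_combination ex + μ * ez + μ ^ 2 * ey
    have hd : (y - x) * (1 - μ ^ 3) = 0 := by linear_combination ky - kx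
    have : y - x = 0 := by
      rcases mul_eq_zero.mp hd with h | h
      · exact h
      · nlinarith
    exact h1 (by linarith)
end
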